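/- Monotonicity, bounds and limits of the extremal shock states u[R,B,f] and v[L,A,f] (Remark 3.2): Let f, θ, T be as in the context. (a) Fix B > θ and, for each R ∈ (0, T·f'(B)), let y_R be a solution of the left backward-shock Cauchy problem with data (R,B) and set u[R] := (f')⁻¹((R + y_R(T))/T). Then R ↦ u[R] is strictly increasing on (0, T·f'(B)), satisfies B̄ < u[R] < B for all R, and u[R] → B̄ as R → 0⁺ while u[R] → B as R → T·f'(B)⁻. (b) Fix A < θ and, for each L ∈ (T·f'(A), 0), let x_L be a solution of the right backward-shock Cauchy problem with data (L,A) and set v[L] := (f')⁻¹((L + x_L(T))/T). Then L ↦ v[L] is strictly increasing on (T·f'(A), 0), satisfies A < v[L] < Ā for all L, and v[L] → A as L → T·f'(A)⁺ while v[L] → Ā as L → 0⁻. -/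

import Mathlib

noncomputable section

open Set Filter

/-- The Rankine–Hugoniot speed `λ(u,v) = (f(v) - f(u)) / (v - u)`. -/
def lamF (f : ℝ → ℝ) (u v : ℝ) : ℝ := (f v - f u) / (v - u)

/-- `y` solves the left backward-shock Cauchy problem with data `(R, B)` on
`[R / f'(B), T]`:  `y(R/f'(B)) = 0` and `y'(t) = λ((f')⁻¹((y(t)+R)/t), B̄)`.
Here `finv` denotes the inverse of `deriv f`. -/
def LeftShockSol (f finv : ℝ → ℝ) (T B Bbar R : ℝ) (y : ℝ → ℝ) : Prop :=
  y (R / deriv f B) = 0 ∧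
  ∀ t ∈ Icc (R / deriv f B) T,
    HasDerivWithinAt y (lamF f (finv ((y t + R) / t)) Bbar) (Icc (R / deriv f B) T) t

/-- `x` solves the right backward-shock Cauchy problem with data `(L, A)` on
`[L / f'(A), T]`:  `x(L/f'(A)) = 0` and `x'(t) = λ((f')⁻¹((x(t)+L)/t), Ā)`.
Here `finv` denotes the inverse of `deriv f`. -/
def RightShockSol (f finv : ℝ → ℝ) (T A Abar L : ℝ) (x : ℝ → ℝ) : Prop :=
  x (L / deriv f A) = 0 ∧
  ∀ t ∈ Icc (L / deriv f A) T,
    HasDerivWithinAt x (lamF f (finv ((x t + L) / t)) Abar) (Icc (L / deriv f A) T) t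

private lemma lamF_neg_aux (f : ℝ → ℝ) (u v : ℝ) :
    lamF (fun w => f (-w)) (-u) (-v) = -lamF f u v := by
  unfold lamF
  simp only [neg_neg]
  rw [show (-v - -u) = -(v - u) by ring, div_neg]

private lemma shock_mainLeft (f : ℝ → ℝ) (a : ℝ) (ha : 0 < a) (hf : ContDiff ℝ 2 f)
    (hf2 : ∀ u : ℝ, a ≤ deriv (deriv f) u)
    (finv : ℝ → ℝ) (hfinv1 : ∀ u : ℝ, finv (deriv f u) = u)
    (hfinv2 : ∀ p : ℝ, deriv f (finv p) = p)
    (T : ℝ) (hT : 0 < T)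
    (B Bbar : ℝ) (hBB : Bbar < B) (hfB : 0 < deriv f B) (hBbar2 : f Bbar = f B)
    (U : ℝ → ℝ)
    (hU : ∀ R ∈ Ioo (0:ℝ) (T * deriv f B),
      ∃ y : ℝ → ℝ, LeftShockSol f finv T B Bbar R y ∧ U R = finv ((R + y T) / T)) :
    StrictMonoOn U (Ioo (0:ℝ) (T * deriv f B)) ∧
    (∀ R ∈ Ioo (0:ℝ) (T * deriv f B), Bbar < U R ∧ U R < B) ∧
    Tendsto U (nhdsWithin (0:ℝ) (Ioi 0)) (nhds Bbar) ∧
    Tendsto U (nhdsWithin (T * deriv f B) (Iio (T * deriv f B))) (nhds B) := by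
  have hfd : Differentiable ℝ f := hf.differentiable (by norm_num)
  have hf' : ContDiff ℝ 1 (deriv f) := by
    have h2 : ContDiff ℝ ((1 : WithTop ℕ∞) + 1) f := by
      rw [(by norm_num : (1 : WithTop ℕ∞) + 1 = 2)]
      exact hf
    exact (contDiff_succ_iff_deriv.mp h2).2.2
  have hfd' : Differentiable ℝ (deriv f) := hf'.differentiable one_ne_zero
  have hD1 : ∀ x : ℝ, HasDerivAt f (deriv f x) x := fun x => (hfd x).hasDerivAt
  have hD2 : ∀ x : ℝ, HasDerivAt (deriv f) (deriv (deriv f) x) x := fun x => (hfd' x).hasDerivAt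
  have hf''pos : ∀ x : ℝ, 0 < deriv (deriv f) x := fun x => lt_of_lt_of_le ha (hf2 x)
  have hmono : StrictMono (deriv f) := strictMono_of_deriv_pos hf''pos
  have hfinvmono : StrictMono finv := by
    intro p q hpq
    by_contra h
    push_neg at h
    have h2 := hmono.monotone h
    rw [hfinv2, hfinv2] at h2
    exact absurd hpq (not_lt.mpr h2)
  have hfinvsurj : Function.Surjective finv := fun u => ⟨deriv f u, hfinv1 u⟩
  have hfinvcont : Continuous finv := by
    have h := (StrictMono.orderIsoOfSurjective finv hfinvmono hfinvsurj).continuous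
    rwa [StrictMono.coe_orderIsoOfSurjective] at h
  have hfinvderiv : ∀ p : ℝ, HasDerivAt finv (deriv (deriv f) (finv p))⁻¹ p := fun p =>
    HasDerivAt.of_local_left_inverse hfinvcont.continuousAt (hD2 (finv p))
      (ne_of_gt (hf''pos _)) (Filter.Eventually.of_forall hfinv2)
  set G : ℝ → ℝ := fun u => f Bbar - f u + deriv f u * (u - Bbar) with hGdef
  have hGderiv : ∀ v : ℝ, HasDerivAt G (deriv (deriv f) v * (v - Bbar)) v := by
    intro v
    have h1 : HasDerivAt (fun u => f Bbar - f u + deriv f u * (u - Bbar))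
        ((0 - deriv f v) + (deriv (deriv f) v * (v - Bbar) + deriv f v * 1)) v :=
      ((hasDerivAt_const v (f Bbar)).sub (hD1 v)).add
        ((hD2 v).mul ((hasDerivAt_id v).sub_const Bbar))
    convert h1 using 1
    ring
  have hGmono : StrictMonoOn G (Ici Bbar) := by
    apply strictMonoOn_of_deriv_pos (convex_Ici Bbar)
    · exact fun x _ => (hGderiv x).continuousAt.continuousWithinAt
    · intro x hx
      rw [interior_Ici] at hx
      rw [(hGderiv x).deriv]
      exact mul_pos (hf''pos x) (sub_pos.mpr hx)
  have hGBbar : G Bbar = 0 := by simp [hGdef]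
  have hGB : G B = deriv f B * (B - Bbar) := by simp [hGdef, hBbar2]
  have hGnonneg : ∀ x : ℝ, Bbar ≤ x → 0 ≤ G x := by
    intro x hx
    rcases eq_or_lt_of_le hx with h | h
    · rw [← h, hGBbar]
    · have := hGmono (self_mem_Ici) (mem_Ici.mpr hx) h
      rw [hGBbar] at this
      exact this.le
  have hGpos : ∀ x : ℝ, Bbar < x → 0 < G x := by
    intro x hx
    have := hGmono (self_mem_Ici) (mem_Ici.mpr hx.le) hx
    rwa [hGBbar] at this
  -- the key conservation-law characterization
  have key : ∀ R ∈ Ioo (0:ℝ) (T * deriv f B),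
      Bbar < U R ∧ G (U R) = R * (B - Bbar) / T := by
    intro R hR
    obtain ⟨y, ⟨hy0, hyd⟩, hUR⟩ := hU R hR
    set t₀ : ℝ := R / deriv f B with ht₀def
    have ht₀pos : 0 < t₀ := div_pos hR.1 hfB
    have ht₀T : t₀ < T := by
      rw [ht₀def, div_lt_iff₀ hfB]
      exact hR.2
    set s : Set ℝ := Icc t₀ T with hsdef
    set E : ℝ → ℝ := fun v => f v - f Bbar - deriv f v * (v - Bbar) with hEdef
    set φ : ℝ → ℝ := fun t => t * E (finv ((y t + R) / t)) with hφdef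
    have hEeq : ∀ v : ℝ, E v = -(G v) := by
      intro v
      simp only [hEdef, hGdef]
      ring
    have hφd : ∀ t ∈ s, HasDerivWithinAt φ 0 s t := by
      intro t ht
      have htpos : 0 < t := lt_of_lt_of_le ht₀pos ht.1
      have htne : t ≠ 0 := ne_of_gt htpos
      have hy := hyd t ht
      set u : ℝ := finv ((y t + R) / t) with hudef
      set lam : ℝ := lamF f u Bbar with hlamdef
      have hw : HasDerivWithinAt (fun τ => (y τ + R) / τ)
          ((lam * t - (y t + R) * 1) / t ^ 2) s t :=
        (hy.add_const R).div (hasDerivWithinAt_id t s) htne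
      have hu : HasDerivWithinAt (fun τ => finv ((y τ + R) / τ))
          ((deriv (deriv f) u)⁻¹ * ((lam * t - (y t + R) * 1) / t ^ 2)) s t := by
        have := HasDerivAt.comp_hasDerivWithinAt (h := fun τ => (y τ + R) / τ)
          t (hfinvderiv ((y t + R) / t)) hw
        rw [← hudef] at this
        exact this
      have hE : HasDerivAt E (-(deriv (deriv f) u * (u - Bbar))) u := by
        have h1 : HasDerivAt (fun v => f v - f Bbar - deriv f v * (v - Bbar))
            (deriv f u - (deriv (deriv f) u * (u - Bbar) + deriv f u * 1)) u :=
          ((hD1 u).sub_const (f Bbar)).sub ((hD2 u).mul ((hasDerivAt_id u).sub_const Bbar))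
        convert h1 using 1
        ring
      have hEu : HasDerivWithinAt (fun τ => E (finv ((y τ + R) / τ)))
          (-(deriv (deriv f) u * (u - Bbar)) *
            ((deriv (deriv f) u)⁻¹ * ((lam * t - (y t + R) * 1) / t ^ 2))) s t :=
        by have := hE.comp_hasDerivWithinAt t hu; exact this
      have hφ' : HasDerivWithinAt φ
          (1 * E (finv ((y t + R) / t)) + t *
            (-(deriv (deriv f) u * (u - Bbar)) *
              ((deriv (deriv f) u)⁻¹ * ((lam * t - (y t + R) * 1) / t ^ 2)))) s t :=
        (hasDerivWithinAt_id t s).mul hEu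
      have hval : 1 * E (finv ((y t + R) / t)) + t *
            (-(deriv (deriv f) u * (u - Bbar)) *
              ((deriv (deriv f) u)⁻¹ * ((lam * t - (y t + R) * 1) / t ^ 2))) = 0 := by
        have hDne : deriv (deriv f) u ≠ 0 := ne_of_gt (hf''pos u)
        have hfu : deriv f u = (y t + R) / t := hfinv2 _
        have hlam : (u - Bbar) * lam = f u - f Bbar := by
          rcases eq_or_ne u Bbar with h | h
          · simp [hlamdef, lamF, h]
          · have hne2 : Bbar - u ≠ 0 := sub_ne_zero.mpr (Ne.symm h)
            rw [hlamdef]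
            unfold lamF
            field_simp
            ring
        rw [← hudef]
        have h1 : t * (-(deriv (deriv f) u * (u - Bbar)) *
            ((deriv (deriv f) u)⁻¹ * ((lam * t - (y t + R) * 1) / t ^ 2)))
            = -(u - Bbar) * (lam - (y t + R) / t) := by
          field_simp
        rw [h1]
        have h2 : E u = f u - f Bbar - ((y t + R) / t) * (u - Bbar) := by
          rw [hEdef]
          simp only
          rw [hfu]
        rw [h2]
        linear_combination -hlam
      exact hval ▸ hφ'
    have hφcont : ContinuousOn φ s := fun t ht => (hφd t ht).continuousWithinAt
    have hconst : ∀ t ∈ s, φ t = φ t₀ :=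
      constant_of_has_deriv_right_zero hφcont
        (fun t ht => (hφd t (Ico_subset_Icc_self ht)).mono_of_mem_nhdsWithin
          (Icc_mem_nhdsGE_of_mem ht))
    have hRt₀ : (y t₀ + R) / t₀ = deriv f B := by
      rw [hy0, zero_add, ht₀def]
      field_simp [ne_of_gt hR.1]
    have hφt₀ : φ t₀ = -(R * (B - Bbar)) := by
      rw [hφdef]
      simp only
      rw [hRt₀, hfinv1]
      rw [hEdef]
      simp only
      rw [← hBbar2, ht₀def]
      field_simp
      ring
    have hTs : T ∈ s := ⟨ht₀T.le, le_refl T⟩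
    have hne : ∀ t ∈ s, finv ((y t + R) / t) ≠ Bbar := by
      intro t ht hcon
      have h1 := (hconst t ht).trans hφt₀
      rw [hφdef] at h1
      simp only at h1
      rw [hcon] at h1
      have hEB : E Bbar = 0 := by
        rw [hEdef]; simp
      rw [hEB, mul_zero] at h1
      nlinarith [hR.1, sub_pos.mpr hBB]
    have hycont : ContinuousOn y s := fun t ht => (hyd t ht).continuousWithinAt
    have hucont : ContinuousOn (fun t => finv ((y t + R) / t)) s := by
      apply hfinvcont.comp_continuousOn
      exact (hycont.add continuousOn_const).div continuousOn_id
        (fun t ht => ne_of_gt (lt_of_lt_of_le ht₀pos ht.1))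
    have hut₀ : finv ((y t₀ + R) / t₀) = B := by rw [hRt₀, hfinv1]
    have hgt : ∀ t ∈ s, Bbar < finv ((y t + R) / t) := by
      by_contra h
      push_neg at h
      obtain ⟨t, ht, hle⟩ := h
      have hlt : finv ((y t + R) / t) < Bbar := lt_of_le_of_ne hle (hne t ht)
      have hsub : Icc t₀ t ⊆ s := Icc_subset_Icc le_rfl ht.2
      have hiv := intermediate_value_Icc' ht.1 (hucont.mono hsub)
      have hBmem : Bbar ∈ Icc ((fun t => finv ((y t + R) / t)) t)
          ((fun t => finv ((y t + R) / t)) t₀) := by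
        simp only
        rw [hut₀]
        exact ⟨hlt.le, hBB.le⟩
      obtain ⟨τ, hτ, hτeq⟩ := hiv hBmem
      exact hne τ (hsub hτ) hτeq
    have hURy : U R = finv ((y T + R) / T) := by
      rw [hUR, add_comm R (y T)]
    constructor
    · rw [hURy]
      exact hgt T hTs
    · have hφT := (hconst T hTs).trans hφt₀
      rw [hφdef] at hφT
      simp only at hφT
      have hET : E (finv ((y T + R) / T)) = -(R * (B - Bbar)) / T := by
        field_simp at hφT ⊢
        linarith [hφT]
      rw [← hURy, hEeq, neg_div] at hET
      linarith [hET]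
  -- assemble the four conclusions
  have hbounds : ∀ R ∈ Ioo (0:ℝ) (T * deriv f B), Bbar < U R ∧ U R < B := by
    intro R hR
    refine ⟨(key R hR).1, ?_⟩
    by_contra hc
    push_neg at hc
    have h1 : G B ≤ G (U R) :=
      hGmono.monotoneOn (mem_Ici.mpr hBB.le) (mem_Ici.mpr (key R hR).1.le) hc
    rw [(key R hR).2, hGB, le_div_iff₀ hT] at h1
    nlinarith [hR.2, sub_pos.mpr hBB, mul_lt_mul_of_pos_right hR.2 (sub_pos.mpr hBB)]
  refine ⟨?_, hbounds, ?_, ?_⟩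
  · intro R₁ h₁ R₂ h₂ h12
    by_contra hc
    push_neg at hc
    have h1 : G (U R₂) ≤ G (U R₁) :=
      hGmono.monotoneOn (mem_Ici.mpr (key R₂ h₂).1.le) (mem_Ici.mpr (key R₁ h₁).1.le) hc
    rw [(key R₁ h₁).2, (key R₂ h₂).2, div_le_div_iff₀ hT hT] at h1
    nlinarith [mul_pos (sub_pos.mpr hBB) hT]
  · rw [tendsto_order]
    constructor
    · intro b hb
      filter_upwards [Ioo_mem_nhdsGT_of_mem
        (⟨le_rfl, mul_pos hT hfB⟩ : (0:ℝ) ∈ Ico 0 (T * deriv f B))] with R hR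
      exact lt_trans hb (key R hR).1
    · intro b hb
      set c : ℝ := min b B with hcdef
      have hc1 : Bbar < c := lt_min hb hBB
      have hc2 : 0 < G c := hGpos c hc1
      have hδ : 0 < min (T * deriv f B) (T * G c / (B - Bbar)) :=
        lt_min (mul_pos hT hfB) (div_pos (mul_pos hT hc2) (sub_pos.mpr hBB))
      filter_upwards [Ioo_mem_nhdsGT_of_mem
        (⟨le_rfl, hδ⟩ : (0:ℝ) ∈ Ico 0 (min (T * deriv f B) (T * G c / (B - Bbar))))] with R hR
      have hRmem : R ∈ Ioo 0 (T * deriv f B) :=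
        ⟨hR.1, lt_of_lt_of_le hR.2 (min_le_left _ _)⟩
      have hlt : G (U R) < G c := by
        rw [(key R hRmem).2, div_lt_iff₀ hT]
        have h2 : R < T * G c / (B - Bbar) := lt_of_lt_of_le hR.2 (min_le_right _ _)
        rw [lt_div_iff₀ (sub_pos.mpr hBB)] at h2
        linarith
      have hUc : U R < c := by
        by_contra hcc
        push_neg at hcc
        have := hGmono.monotoneOn (mem_Ici.mpr hc1.le)
          (mem_Ici.mpr (key R hRmem).1.le) hcc
        linarith
      exact lt_of_lt_of_le hUc (min_le_left b B)
  · rw [tendsto_order]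
    constructor
    · intro b hb
      set c : ℝ := max b Bbar with hcdef
      have hcB : c < B := max_lt hb hBB
      have hcIci : c ∈ Ici Bbar := mem_Ici.mpr (le_max_right _ _)
      have hGc_lt : G c < G B := hGmono hcIci (mem_Ici.mpr hBB.le) hcB
      set r₀ : ℝ := T * G c / (B - Bbar) with hr₀def
      have hr₀lt : r₀ < T * deriv f B := by
        rw [hr₀def, div_lt_iff₀ (sub_pos.mpr hBB)]
        rw [hGB] at hGc_lt
        nlinarith
      have hr₀nonneg : 0 ≤ r₀ :=
        div_nonneg (mul_nonneg hT.le (hGnonneg c (le_max_right _ _)))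
          (sub_pos.mpr hBB).le
      filter_upwards [Ioo_mem_nhdsLT_of_mem
        (⟨hr₀lt, le_rfl⟩ : T * deriv f B ∈ Ioc r₀ (T * deriv f B))] with R hR
      have hRmem : R ∈ Ioo 0 (T * deriv f B) :=
        ⟨lt_of_le_of_lt hr₀nonneg hR.1, hR.2⟩
      have hGgt : G c < G (U R) := by
        rw [(key R hRmem).2, lt_div_iff₀ hT]
        have h3 : r₀ < R := hR.1
        rw [hr₀def, div_lt_iff₀ (sub_pos.mpr hBB)] at h3
        linarith
      have hcU : c < U R := by
        by_contra hcc
        push_neg at hcc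
        have := hGmono.monotoneOn (mem_Ici.mpr (key R hRmem).1.le) hcIci hcc
        linarith
      exact lt_of_le_of_lt (le_max_left b Bbar) hcU
    · intro b hb
      filter_upwards [Ioo_mem_nhdsLT_of_mem
        (⟨mul_pos hT hfB, le_rfl⟩ : T * deriv f B ∈ Ioc 0 (T * deriv f B))] with R hR
      exact lt_trans (hbounds R hR).2 hb

/-- **Remark 3.2**: monotonicity, bounds and limits of the extremal shock states
`u[R,B,f]` and `v[L,A,f]`. -/
theorem extremal_shock_states_monotone
    (f : ℝ → ℝ) (a : ℝ) (ha : 0 < a) (hf : ContDiff ℝ 2 f)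
    (hf2 : ∀ u : ℝ, a ≤ deriv (deriv f) u)
    (θ : ℝ) (hθ : deriv f θ = 0)
    (finv : ℝ → ℝ) (hfinv1 : ∀ u : ℝ, finv (deriv f u) = u)
    (hfinv2 : ∀ p : ℝ, deriv f (finv p) = p)
    (T : ℝ) (hT : 0 < T)
    (B Bbar : ℝ) (hB : θ < B) (hBbar1 : Bbar ≤ θ) (hBbar2 : f Bbar = f B)
    (A Abar : ℝ) (hA : A < θ) (hAbar1 : θ ≤ Abar) (hAbar2 : f Abar = f A)
    (U V : ℝ → ℝ)
    (hU : ∀ R ∈ Ioo (0:ℝ) (T * deriv f B),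
      ∃ y : ℝ → ℝ, LeftShockSol f finv T B Bbar R y ∧ U R = finv ((R + y T) / T))
    (hV : ∀ L ∈ Ioo (T * deriv f A) (0:ℝ),
      ∃ x : ℝ → ℝ, RightShockSol f finv T A Abar L x ∧ V L = finv ((L + x T) / T)) :
    StrictMonoOn U (Ioo (0:ℝ) (T * deriv f B)) ∧
    (∀ R ∈ Ioo (0:ℝ) (T * deriv f B), Bbar < U R ∧ U R < B) ∧
    Tendsto U (nhdsWithin (0:ℝ) (Ioi 0)) (nhds Bbar) ∧
    Tendsto U (nhdsWithin (T * deriv f B) (Iio (T * deriv f B))) (nhds B) ∧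
    StrictMonoOn V (Ioo (T * deriv f A) (0:ℝ)) ∧
    (∀ L ∈ Ioo (T * deriv f A) (0:ℝ), A < V L ∧ V L < Abar) ∧
    Tendsto V (nhdsWithin (T * deriv f A) (Ioi (T * deriv f A))) (nhds A) ∧
    Tendsto V (nhdsWithin (0:ℝ) (Iio 0)) (nhds Abar) := by
  have hfd : Differentiable ℝ f := hf.differentiable (by norm_num)
  have hf' : ContDiff ℝ 1 (deriv f) := by
    have h2 : ContDiff ℝ ((1 : WithTop ℕ∞) + 1) f := by
      rw [(by norm_num : (1 : WithTop ℕ∞) + 1 = 2)]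
      exact hf
    exact (contDiff_succ_iff_deriv.mp h2).2.2
  have hfd' : Differentiable ℝ (deriv f) := hf'.differentiable one_ne_zero
  have hf''pos : ∀ x : ℝ, 0 < deriv (deriv f) x := fun x => lt_of_lt_of_le ha (hf2 x)
  have hmono : StrictMono (deriv f) := strictMono_of_deriv_pos hf''pos
  have hfB : 0 < deriv f B := by
    have := hmono hB
    rwa [hθ] at this
  have hfA : deriv f A < 0 := by
    have := hmono hA
    rwa [hθ] at this
  -- part (a)
  obtain ⟨ha1, ha2, ha3, ha4⟩ := shock_mainLeft f a ha hf hf2 finv hfinv1 hfinv2 T hT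
    B Bbar (lt_of_le_of_lt hBbar1 hB) hfB hBbar2 U hU
  -- part (b) by reflection
  set g : ℝ → ℝ := fun u => f (-u) with hgdef
  have hg : ContDiff ℝ 2 g := hf.comp (contDiff_id.neg)
  have hdg0 : ∀ u : ℝ, HasDerivAt g (-(deriv f (-u))) u := by
    intro u
    have h := ((hfd (-u)).hasDerivAt).comp u (hasDerivAt_neg u)
    rw [show -(deriv f (-u)) = deriv f (-u) * -1 by ring]
    exact h
  have hdg : deriv g = fun u => -(deriv f (-u)) := funext fun u => (hdg0 u).deriv
  have hddg : ∀ u : ℝ, HasDerivAt (deriv g) (deriv (deriv f) (-u)) u := by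
    intro u
    rw [hdg]
    have h := (((hfd' (-u)).hasDerivAt).comp u (hasDerivAt_neg u)).neg
    rw [show deriv (deriv f) (-u) = -(deriv (deriv f) (-u) * -1) by ring]
    exact h
  have hg2 : ∀ u : ℝ, a ≤ deriv (deriv g) u := fun u => by
    rw [(hddg u).deriv]; exact hf2 (-u)
  set ginv : ℝ → ℝ := fun p => -finv (-p) with hginvdef
  have hginv1 : ∀ u : ℝ, ginv (deriv g u) = u := by
    intro u
    simp only [hginvdef, hdg, neg_neg, hfinv1]
  have hginv2 : ∀ p : ℝ, deriv g (ginv p) = p := by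
    intro p
    simp only [hginvdef, hdg, neg_neg, hfinv2]
  have hdgA : deriv g (-A) = -(deriv f A) := by rw [hdg]; simp
  have hgA : 0 < deriv g (-A) := by rw [hdgA]; linarith
  have hTA : T * deriv g (-A) = -(T * deriv f A) := by rw [hdgA]; ring
  have hAA : -Abar < -A := by
    have : A < Abar := lt_of_lt_of_le hA hAbar1
    linarith
  have hgbar : g (-Abar) = g (-A) := by
    simp only [hgdef, neg_neg]
    exact hAbar2
  set W : ℝ → ℝ := fun R => -V (-R) with hWdef
  have hUW : ∀ R ∈ Ioo (0:ℝ) (T * deriv g (-A)),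
      ∃ y : ℝ → ℝ, LeftShockSol g ginv T (-A) (-Abar) R y ∧ W R = ginv ((R + y T) / T) := by
    intro R hR
    rw [hTA] at hR
    have hL : -R ∈ Ioo (T * deriv f A) (0:ℝ) := ⟨by linarith [hR.2], by linarith [hR.1]⟩
    obtain ⟨x, ⟨hx0, hxd⟩, hVx⟩ := hV (-R) hL
    have hdom : R / deriv g (-A) = -R / deriv f A := by
      rw [hdgA, div_neg, neg_div]
    refine ⟨fun t => -x t, ⟨?_, ?_⟩, ?_⟩
    · rw [hdom]
      simp [hx0]
    · intro t ht
      rw [hdom] at ht ⊢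
      have h := (hxd t ht).neg
      have harg : ((fun t => -x t) t + R) / t = -((x t + -R) / t) := by
        simp only
        ring
      rw [harg]
      have hginvarg : ginv (-((x t + -R) / t)) = -(finv ((x t + -R) / t)) := by
        simp only [hginvdef, neg_neg]
      rw [hginvarg]
      have hlam : lamF g (-(finv ((x t + -R) / t))) (-Abar)
          = -lamF f (finv ((x t + -R) / t)) Abar := lamF_neg_aux f _ _
      rw [hlam]
      exact h
    · simp only [hWdef, hginvdef, hVx]
      congr 1
      congr 1
      ring
  obtain ⟨hb1, hb2, hb3, hb4⟩ := shock_mainLeft g a ha hg hg2 ginv hginv1 hginv2 T hT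
    (-A) (-Abar) hAA hgA hgbar W hUW
  have hWV : ∀ L : ℝ, V L = -W (-L) := by
    intro L
    simp [hWdef]
  have hnegIio : ∀ c : ℝ, Tendsto (fun x : ℝ => -x) (nhdsWithin c (Iio c))
      (nhdsWithin (-c) (Ioi (-c))) := by
    intro c
    apply tendsto_nhdsWithin_of_tendsto_nhds_of_eventually_within
    · exact ((continuous_neg.tendsto c)).mono_left nhdsWithin_le_nhds
    · exact eventually_mem_nhdsWithin.mono (fun x hx => by
        simp only [mem_Ioi]
        exact neg_lt_neg hx)
  have hnegIoi : ∀ c : ℝ, Tendsto (fun x : ℝ => -x) (nhdsWithin c (Ioi c))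
      (nhdsWithin (-c) (Iio (-c))) := by
    intro c
    apply tendsto_nhdsWithin_of_tendsto_nhds_of_eventually_within
    · exact ((continuous_neg.tendsto c)).mono_left nhdsWithin_le_nhds
    · exact eventually_mem_nhdsWithin.mono (fun x hx => by
        simp only [mem_Iio]
        exact neg_lt_neg hx)
  refine ⟨ha1, ha2, ha3, ha4, ?_, ?_, ?_, ?_⟩
  · intro L₁ h₁ L₂ h₂ h12
    have hm₁ : -L₁ ∈ Ioo (0:ℝ) (T * deriv g (-A)) := by
      rw [hTA]
      exact ⟨by linarith [h₁.2], by linarith [h₁.1]⟩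
    have hm₂ : -L₂ ∈ Ioo (0:ℝ) (T * deriv g (-A)) := by
      rw [hTA]
      exact ⟨by linarith [h₂.2], by linarith [h₂.1]⟩
    have := hb1 hm₂ hm₁ (by linarith)
    rw [hWV L₁, hWV L₂]
    linarith
  · intro L hL
    have hm : -L ∈ Ioo (0:ℝ) (T * deriv g (-A)) := by
      rw [hTA]
      exact ⟨by linarith [hL.2], by linarith [hL.1]⟩
    obtain ⟨hc1, hc2⟩ := hb2 (-L) hm
    rw [hWV L]
    constructor <;> linarith
  · -- V tendsto A as L → (T f'(A))⁺
    have h1 : Tendsto (fun L : ℝ => -L) (nhdsWithin (T * deriv f A) (Ioi (T * deriv f A)))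
        (nhdsWithin (T * deriv g (-A)) (Iio (T * deriv g (-A)))) := by
      rw [hTA]
      exact hnegIoi (T * deriv f A)
    have h2 := hb4.comp h1
    have h3 := h2.neg
    rw [neg_neg] at h3
    have : V = (fun L : ℝ => -W (-L)) := funext hWV
    rw [this]
    exact h3
  · -- V tendsto Abar as L → 0⁻
    have h1 : Tendsto (fun L : ℝ => -L) (nhdsWithin (0:ℝ) (Iio 0))
        (nhdsWithin (0:ℝ) (Ioi 0)) := by
      have := hnegIio (0:ℝ)
      rwa [neg_zero] at this
    have h2 := hb3.comp h1
    have h3 := h2.neg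
    rw [neg_neg] at h3
    have : V = (fun L : ℝ => -W (-L)) := funext hWV
    rw [this]
    exact h3
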